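/- A branching simulation function maps minimal executions to minimal executions: if f : X → Y is a branching simulation function and p is a minimal execution of X with observable trace ϱ, then the induced execution p_f of Y is minimal with observable trace ϱ. -/

import Mathlib

variable {X Y A : Type}

/-- `s` is the list of states of an execution with trace `σ`. -/
def IsExec {X A : Type} (tr : X → A → X → Prop) (σ : List A) (s : List X) : Prop :=
  s.length = σ.length + 1 ∧
  ∀ i (hi : i + 1 < s.length) (hσ : i < σ.length),
    tr (s[i]'(Nat.lt_of_succ_lt hi)) (σ[i]'hσ) (s[i + 1]'hi)

/-- The hiding map erasing the silent action `τ = none`. -/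
def hide {A : Type} (σ : List (Option A)) : List A := σ.reduceOption

/-- Zero or more silent steps. -/
def Silent {X A : Type} (tr : X → Option A → X → Prop) : X → X → Prop :=
  Relation.ReflTransGen (fun x x' => tr x none x')

/-- Minimal execution at observable trace `ϱ`. -/
def MinExec {X A : Type} (tr : X → Option A → X → Prop) (ϱ : List A)
    (σ : List (Option A)) (s : List X) : Prop :=
  IsExec tr σ s ∧ hide σ = ϱ ∧
  ∀ σ' s', IsExec tr σ' s' → σ' <+: σ → s' <+: s → hide σ' = ϱ →
    σ' = σ ∧ s' = s

/-- A branching simulation function. -/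
def BranchingSim (trX : X → Option A → X → Prop) (trY : Y → Option A → Y → Prop)
    (f : X → Y) : Prop :=
  (∀ x x' (a : A), trX x (some a) x' → trY (f x) (some a) (f x')) ∧
  (∀ x x', trX x none x' → f x = f x' ∨ trY (f x) none (f x')) ∧
  (∀ x₁ x₂ x₃, Silent trX x₁ x₂ → Silent trX x₂ x₃ → f x₁ = f x₃ → f x₁ = f x₂)

/-- The inductive definition of the induced execution `p_f`: `Lift f σ s σ' s'`
says that the execution of `Y` with trace `σ'` and states `s'` is obtained from
the execution of `X` with trace `σ` and states `s` by the clauses defining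
`p_f`: the empty execution at `x` maps to the empty execution at `f x`; a
visible `a`-extension extends the image by `a`; a silent extension extends the
image by `τ` when the `f`-images of the endpoints differ, and leaves the image
unchanged when they coincide. -/
inductive Lift {X Y A : Type} (f : X → Y) :
    List (Option A) → List X → List (Option A) → List Y → Prop where
  | nil (x : X) : Lift f [] [x] [] [f x]
  | vis {σ s σ' s'} (a : A) (x : X) :
      Lift f σ s σ' s' →
      Lift f (σ ++ [some a]) (s ++ [x]) (σ' ++ [some a]) (s' ++ [f x])
  | tau_eq {σ s σ' s'} (x xl : X) :
      Lift f σ s σ' s' → s.getLast? = some xl → f x = f xl →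
      Lift f (σ ++ [none]) (s ++ [x]) σ' s'
  | tau_ne {σ s σ' s'} (x xl : X) :
      Lift f σ s σ' s' → s.getLast? = some xl → f x ≠ f xl →
      Lift f (σ ++ [none]) (s ++ [x]) (σ' ++ [none]) (s' ++ [f x])

lemma isExec_snoc {tr : X → Option A → X → Prop} {σ : List (Option A)} {s : List X}
    {a : Option A} {x : X} :
    IsExec tr (σ ++ [a]) (s ++ [x]) ↔
      IsExec tr σ s ∧ ∃ xl, s.getLast? = some xl ∧ tr xl a x := by
  constructor
  · rintro ⟨hlen, htr⟩
    simp only [List.length_append, List.length_singleton] at hlen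
    have hs : s.length = σ.length + 1 := by omega
    have hne : s ≠ [] := by intro h; simp [h] at hs
    refine ⟨⟨hs, fun i hi hσ => ?_⟩, s.getLast hne, ?_, ?_⟩
    · have h := htr i (by simp; omega) (by simp; omega)
      rwa [List.getElem_append_left (by omega), List.getElem_append_left (by omega),
        List.getElem_append_left (by omega)] at h
    · exact (List.getLast?_eq_getLast hne)
    · have h := htr σ.length (by simp; omega) (by simp)
      rw [List.getElem_append_left (by omega), List.getElem_append_right (by omega),
        List.getElem_append_right (by omega)] at h
      simpa [List.getLast_eq_getElem, hs] using h
  · rintro ⟨⟨hlen, htr⟩, xl, hxl, hstep⟩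
    have hne : s ≠ [] := by intro h; simp [h] at hlen
    refine ⟨by simp [hlen], fun i hi hσ => ?_⟩
    simp only [List.length_append, List.length_singleton] at hσ
    rcases Nat.lt_or_ge i σ.length with h | h
    · rw [List.getElem_append_left (by omega), List.getElem_append_left (by omega),
        List.getElem_append_left (by omega)]
      exact htr i (by omega) h
    · have hi' : i = σ.length := by omega
      subst hi'
      rw [List.getElem_append_left (by omega), List.getElem_append_right (by omega),
        List.getElem_append_right (by omega)]
      have hxl' : s[σ.length]'(by omega) = xl := by
        rw [List.getLast?_eq_getLast hne] at hxl
        have := (Option.some.injEq _ _).mp hxl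
        simpa [List.getLast_eq_getElem, hlen] using this
      rw [hxl']
      simpa using hstep

lemma isExec_take {tr : X → Option A → X → Prop} {σ : List (Option A)} {s : List X}
    (h : IsExec tr σ s) (j : ℕ) (hj : j ≤ σ.length) :
    IsExec tr (σ.take j) (s.take (j + 1)) := by
  obtain ⟨hlen, htr⟩ := h
  refine ⟨by simp; omega, fun i hi hσ => ?_⟩
  simp only [List.length_take] at hi hσ
  rw [List.getElem_take, List.getElem_take, List.getElem_take]
  exact htr i (by omega) (by omega)

lemma lift_hide {f : X → Y} {σ : List (Option A)} {s : List X} {σ' : List (Option A)}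
    {s' : List Y} (h : Lift f σ s σ' s') : hide σ' = hide σ := by
  induction h with
  | nil => rfl
  | vis a x h ih => simpa [hide, List.reduceOption_append] using ih
  | tau_eq x xl h h1 h2 ih => simpa [hide, List.reduceOption_append] using ih
  | tau_ne x xl h h1 h2 ih => simpa [hide, List.reduceOption_append] using ih

lemma lift_last {f : X → Y} {σ : List (Option A)} {s : List X} {σ' : List (Option A)}
    {s' : List Y} (h : Lift f σ s σ' s') :
    ∀ xl, s.getLast? = some xl → s'.getLast? = some (f xl) := by
  induction h with
  | nil x => intro xl hxl; simp at hxl ⊢; rw [hxl]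
  | vis a x h ih => intro xl hxl; simp at hxl ⊢; rw [hxl]
  | tau_eq x xl' h h1 h2 ih =>
      intro xl hxl; simp at hxl; rw [← hxl, h2]; exact ih xl' h1
  | tau_ne x xl' h h1 h2 ih => intro xl hxl; simp at hxl ⊢; rw [hxl]

lemma lift_isExec {trX : X → Option A → X → Prop} {trY : Y → Option A → Y → Prop}
    {f : X → Y} (h1 : ∀ x x' (a : A), trX x (some a) x' → trY (f x) (some a) (f x'))
    (h2 : ∀ x x', trX x none x' → f x = f x' ∨ trY (f x) none (f x'))
    {σ : List (Option A)} {s : List X} {σ' : List (Option A)} {s' : List Y}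
    (h : Lift f σ s σ' s') (hex : IsExec trX σ s) : IsExec trY σ' s' := by
  induction h with
  | nil x => exact ⟨rfl, fun i hi hσ => by simp at hσ⟩
  | vis a x h ih =>
      rw [isExec_snoc] at hex ⊢
      obtain ⟨hex, xl, hxl, hstep⟩ := hex
      exact ⟨ih hex, f xl, lift_last h xl hxl, h1 _ _ _ hstep⟩
  | tau_eq x xl h hl he ih =>
      rw [isExec_snoc] at hex
      exact ih hex.1
  | tau_ne x xl h hl hne ih =>
      rw [isExec_snoc] at hex ⊢
      obtain ⟨hex, xl', hxl', hstep⟩ := hex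
      have hx : xl' = xl := by rw [hl] at hxl'; exact ((Option.some.injEq _ _).mp hxl').symm
      subst hx
      rcases h2 _ _ hstep with heq | hstep'
      · exact absurd heq.symm hne
      · exact ⟨ih hex, f xl', lift_last h xl' hl, hstep'⟩

lemma concat_inj' {α : Type*} {l₁ l₂ : List α} {a b : α} (h : l₁ ++ [a] = l₂ ++ [b]) :
    l₁ = l₂ ∧ a = b := by
  have := List.append_inj' h rfl; simpa using this

lemma lift_inv {f : X → Y} {σ : List (Option A)} {s : List X} {σ' : List (Option A)}
    {s' : List Y} (h : Lift f σ s σ' s') :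
    (σ = [] ∧ ∃ x, s = [x] ∧ σ' = [] ∧ s' = [f x]) ∨
    (∃ σ₀ s₀ σ₀' s₀', ∃ (a : A), ∃ x, Lift f σ₀ s₀ σ₀' s₀' ∧ σ = σ₀ ++ [some a] ∧
      s = s₀ ++ [x] ∧ σ' = σ₀' ++ [some a] ∧ s' = s₀' ++ [f x]) ∨
    (∃ σ₀ s₀ x xl, Lift f σ₀ s₀ σ' s' ∧ s₀.getLast? = some xl ∧ f x = f xl ∧
      σ = σ₀ ++ [none] ∧ s = s₀ ++ [x]) ∨
    (∃ σ₀ s₀ σ₀' s₀' x xl, Lift f σ₀ s₀ σ₀' s₀' ∧ s₀.getLast? = some xl ∧ f x ≠ f xl ∧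
      σ = σ₀ ++ [none] ∧ s = s₀ ++ [x] ∧ σ' = σ₀' ++ [none] ∧ s' = s₀' ++ [f x]) := by
  cases h with
  | nil x => exact Or.inl ⟨rfl, x, rfl, rfl, rfl⟩
  | vis a x h => exact Or.inr (Or.inl ⟨_, _, _, _, a, x, h, rfl, rfl, rfl, rfl⟩)
  | tau_eq x xl h hl he => exact Or.inr (Or.inr (Or.inl ⟨_, _, x, xl, h, hl, he, rfl, rfl⟩))
  | tau_ne x xl h hl hne =>
      exact Or.inr (Or.inr (Or.inr ⟨_, _, _, _, x, xl, h, hl, hne, rfl, rfl, rfl, rfl⟩))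

lemma lift_fun {f : X → Y} {σ : List (Option A)} {s : List X} {σ₁ σ₂ : List (Option A)}
    {s₁ s₂ : List Y} (h1 : Lift f σ s σ₁ s₁) (h2 : Lift f σ s σ₂ s₂) :
    σ₁ = σ₂ ∧ s₁ = s₂ := by
  induction h1 generalizing σ₂ s₂ with
  | nil x =>
      rcases lift_inv h2 with ⟨_, x', hs, hσ', hs'⟩ | ⟨_, _, _, _, _, _, _, hσ, _⟩ |
        ⟨_, _, _, _, _, _, _, hσ, _⟩ | ⟨_, _, _, _, _, _, _, _, _, hσ, _⟩
      · simp at hs; subst hs; exact ⟨hσ'.symm ▸ rfl, by rw [hs']⟩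
      · simp at hσ
      · simp at hσ
      · simp at hσ
  | vis a x h ih =>
      rcases lift_inv h2 with ⟨hσ, _⟩ | ⟨σ₀, s₀, σ₀', s₀', a', x', h', hσ, hs, hσ', hs'⟩ |
        ⟨_, _, _, _, _, _, _, hσ, _⟩ | ⟨_, _, _, _, _, _, _, _, _, hσ, _⟩
      · simp at hσ
      · obtain ⟨hσ1, ha⟩ := concat_inj' hσ
        obtain ⟨hs1, hx⟩ := concat_inj' hs
        cases (Option.some.injEq _ _).mp ha
        subst hσ1 hs1 hx
        obtain ⟨e1, e2⟩ := ih h'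
        rw [hσ', hs', e1, e2]; exact ⟨rfl, rfl⟩
      · obtain ⟨_, ha⟩ := concat_inj' hσ; simp at ha
      · obtain ⟨_, ha⟩ := concat_inj' hσ; simp at ha
  | tau_eq x xl h hl he ih =>
      rcases lift_inv h2 with ⟨hσ, _⟩ | ⟨_, _, _, _, _, _, _, hσ, _⟩ |
        ⟨σ₀, s₀, x', xl', h', hl', he', hσ, hs⟩ |
        ⟨σ₀, s₀, σ₀', s₀', x', xl', h', hl', hne', hσ, hs, hσ', hs'⟩
      · simp at hσ
      · obtain ⟨_, ha⟩ := concat_inj' hσ; simp at ha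
      · obtain ⟨hσ1, _⟩ := concat_inj' hσ
        obtain ⟨hs1, hx⟩ := concat_inj' hs
        subst hσ1 hs1 hx
        exact ih h'
      · obtain ⟨hσ1, _⟩ := concat_inj' hσ
        obtain ⟨hs1, hx⟩ := concat_inj' hs
        subst hσ1 hs1 hx
        rw [hl] at hl'
        cases (Option.some.injEq _ _).mp hl'
        exact absurd he hne'
  | tau_ne x xl h hl hne ih =>
      rcases lift_inv h2 with ⟨hσ, _⟩ | ⟨_, _, _, _, _, _, _, hσ, _⟩ |
        ⟨σ₀, s₀, x', xl', h', hl', he', hσ, hs⟩ |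
        ⟨σ₀, s₀, σ₀', s₀', x', xl', h', hl', hne', hσ, hs, hσ', hs'⟩
      · simp at hσ
      · obtain ⟨_, ha⟩ := concat_inj' hσ; simp at ha
      · obtain ⟨hσ1, _⟩ := concat_inj' hσ
        obtain ⟨hs1, hx⟩ := concat_inj' hs
        subst hσ1 hs1 hx
        rw [hl] at hl'
        cases (Option.some.injEq _ _).mp hl'
        exact absurd he' hne
      · obtain ⟨hσ1, _⟩ := concat_inj' hσ
        obtain ⟨hs1, hx⟩ := concat_inj' hs
        subst hσ1 hs1 hx
        obtain ⟨e1, e2⟩ := ih h'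
        rw [hσ', hs', e1, e2]; exact ⟨rfl, rfl⟩

lemma lift_lengths {f : X → Y} {σ : List (Option A)} {s : List X} {σ' : List (Option A)}
    {s' : List Y} (h : Lift f σ s σ' s') :
    s.length = σ.length + 1 ∧ s'.length = σ'.length + 1 := by
  induction h with
  | nil => simp
  | vis a x h ih => simp [ih.1, ih.2]
  | tau_eq x xl h h1 h2 ih => simp [ih.1, ih.2]
  | tau_ne x xl h h1 h2 ih => simp [ih.1, ih.2]

lemma lift_take {f : X → Y} {σ : List (Option A)} {s : List X} {σ' : List (Option A)}
    {s' : List Y} (h : Lift f σ s σ' s') :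
    ∀ k ≤ σ'.length, ∃ j ≤ σ.length,
      Lift f (σ.take j) (s.take (j + 1)) (σ'.take k) (s'.take (k + 1)) := by
  induction h with
  | nil x =>
      intro k hk
      simp at hk; subst hk
      exact ⟨0, Nat.le_refl _, by simpa using Lift.nil x⟩
  | @vis σ s σ' s' a x h ih =>
      intro k hk
      obtain ⟨hsl, hsl'⟩ := lift_lengths h
      simp only [List.length_append, List.length_singleton] at hk
      rcases Nat.lt_or_ge k (σ'.length + 1) with hk' | hk'
      · obtain ⟨j, hj, hl⟩ := ih k (by omega)
        refine ⟨j, by simp; omega, ?_⟩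
        rw [List.take_append_of_le_length (by omega), List.take_append_of_le_length (by omega),
          List.take_append_of_le_length (by omega), List.take_append_of_le_length (by omega)]
        exact hl
      · have hkeq : k = σ'.length + 1 := by omega
        subst hkeq
        refine ⟨σ.length + 1, by simp, ?_⟩
        rw [List.take_of_length_le (by simp), List.take_of_length_le (by simp; omega),
          List.take_of_length_le (by simp), List.take_of_length_le (by simp; omega)]
        exact Lift.vis a x h
  | @tau_eq σ s σ' s' x xl h hl he ih =>
      intro k hk
      obtain ⟨hsl, hsl'⟩ := lift_lengths h
      obtain ⟨j, hj, hlift⟩ := ih k hk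
      refine ⟨j, by simp; omega, ?_⟩
      rw [List.take_append_of_le_length (by omega), List.take_append_of_le_length (by omega)]
      exact hlift
  | @tau_ne σ s σ' s' x xl h hl hne ih =>
      intro k hk
      obtain ⟨hsl, hsl'⟩ := lift_lengths h
      simp only [List.length_append, List.length_singleton] at hk
      rcases Nat.lt_or_ge k (σ'.length + 1) with hk' | hk'
      · obtain ⟨j, hj, hlift⟩ := ih k (by omega)
        refine ⟨j, by simp; omega, ?_⟩
        rw [List.take_append_of_le_length (by omega), List.take_append_of_le_length (by omega),
          List.take_append_of_le_length (by omega), List.take_append_of_le_length (by omega)]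
        exact hlift
      · have hkeq : k = σ'.length + 1 := by omega
        subst hkeq
        refine ⟨σ.length + 1, by simp, ?_⟩
        rw [List.take_of_length_le (by simp), List.take_of_length_le (by simp; omega),
          List.take_of_length_le (by simp), List.take_of_length_le (by simp; omega)]
        exact Lift.tau_ne x xl h hl hne

/-- a branching simulation function maps minimal executions to
minimal executions: if `p` is a minimal execution of `X` with observable trace
`ϱ`, then the induced execution `p_f` of `Y` is minimal with observable
trace `ϱ`. -/
theorem branching_sim_preserves_minimal_executions
    (trX : X → Option A → X → Prop) (trY : Y → Option A → Y → Prop)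
    (f : X → Y) (hf : BranchingSim trX trY f) (ϱ : List A)
    (σ : List (Option A)) (s : List X) (σ' : List (Option A)) (s' : List Y)
    (hmin : MinExec trX ϱ σ s) (hlift : Lift f σ s σ' s') :
    MinExec trY ϱ σ' s' := by
  obtain ⟨hexX, hhσ, hminX⟩ := hmin
  obtain ⟨hbs1, hbs2, -⟩ := hf
  refine ⟨lift_isExec hbs1 hbs2 hlift hexX, by rw [lift_hide hlift]; exact hhσ, ?_⟩
  intro σ'' s'' hex'' hpre1 hpre2 hhide''
  have hlen'' := hex''.1
  have hk : σ''.length ≤ σ'.length := hpre1.length_le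
  have hσ''eq : σ'' = σ'.take σ''.length := List.prefix_iff_eq_take.mp hpre1
  have hs''eq : s'' = s'.take (σ''.length + 1) := by
    have h := List.prefix_iff_eq_take.mp hpre2; rwa [hlen''] at h
  obtain ⟨j, hj, hl⟩ := lift_take hlift σ''.length hk
  rw [← hσ''eq, ← hs''eq] at hl
  have hhidej : hide (σ.take j) = ϱ := by rw [← lift_hide hl]; exact hhide''
  obtain ⟨e1, e2⟩ := hminX _ _ (isExec_take hexX j hj) (List.take_prefix _ _)
    (List.take_prefix _ _) hhidej
  rw [e1, e2] at hl
  exact lift_fun hl hlift
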